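/- If the basis F has the hypergroup property at x_0, then every Markov sequence (λ_i) (i.e., sequence such that the operator K(f_i) = λ_i f_i is a Markov operator) can be written as λ_i = ∫ f_i(x)/f_i(x_0) dν(x) for some probability measure ν on E, and conversely every probability measure ν yields a Markov sequence this way. -/
import Mathlib

theorem stmt9 {E : Type*} [Fintype E] [Nonempty E] (n : ℕ)
    (μ : E → ℝ) (f : Fin (n + 1) → E → ℝ)
    (hcard : Fintype.card E = n + 1)
    (hμpos : ∀ x, 0 < μ x) (hμsum : ∑ x, μ x = 1)
    (hf0 : ∀ x, f 0 x = 1)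
    (horth : ∀ i j, ∑ x, μ x * f i x * f j x = if i = j then (1 : ℝ) else 0)
    (x₀ : E) (hpos : ∀ i, 0 < f i x₀)
    (hHGP : ∀ x y z, 0 ≤ ∑ i, f i x * f i y * f i z / f i x₀)
    (l : Fin (n + 1) → ℝ) :
    (∃ K : (E → ℝ) →ₗ[ℝ] (E → ℝ),
        (K fun _ => 1) = (fun _ => 1) ∧
        (∀ g : E → ℝ, (∀ x, 0 ≤ g x) → ∀ x, 0 ≤ K g x) ∧
        (∀ i, K (f i) = l i • f i)) ↔
    (∃ ν : E → ℝ, (∀ x, 0 ≤ ν x) ∧ (∑ x, ν x = 1) ∧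
        ∀ i, l i = ∑ x, ν x * (f i x / f i x₀)) := by
  classical
  -- first moments: ∑ x, μ x * f i x = δ_{i0}
  have hmom : ∀ i, ∑ x, μ x * f i x = if i = 0 then (1 : ℝ) else 0 := by
    intro i
    have := horth i 0
    simp only [hf0, mul_one] at this
    simpa using this
  -- completeness: ∑ i, f i x * f i y = if x = y then 1/μ x else 0
  have key : ∀ x y : E, ∑ i, f i x * f i y = if x = y then 1 / μ x else 0 := by
    set e : Fin (n + 1) ≃ E := (Fintype.equivFinOfCardEq hcard).symm with he
    set A : Matrix (Fin (n + 1)) (Fin (n + 1)) ℝ :=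
      Matrix.of (fun i k => Real.sqrt (μ (e k)) * f i (e k)) with hA
    have hAAT : A * A.transpose = 1 := by
      ext i j
      simp only [Matrix.mul_apply, Matrix.transpose_apply, hA, Matrix.of_apply,
        Matrix.one_apply]
      rw [← horth i j, ← Equiv.sum_comp e (fun x => μ x * f i x * f j x)]
      refine Finset.sum_congr rfl fun k _ => ?_
      have h := Real.mul_self_sqrt (le_of_lt (hμpos (e k)))
      linear_combination (f i (e k) * f j (e k)) * h
    have hATA : A.transpose * A = 1 := mul_eq_one_comm.mp hAAT
    intro x y
    have h := congrFun (congrFun hATA (e.symm x)) (e.symm y)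
    simp only [Matrix.mul_apply, Matrix.transpose_apply, hA, Matrix.of_apply,
      Matrix.one_apply, Equiv.apply_symm_apply, EmbeddingLike.apply_eq_iff_eq] at h
    have hsx := Real.sq_sqrt (le_of_lt (hμpos x))
    have hsxpos : 0 < Real.sqrt (μ x) := Real.sqrt_pos.mpr (hμpos x)
    have hsypos : 0 < Real.sqrt (μ y) := Real.sqrt_pos.mpr (hμpos y)
    have h2 : Real.sqrt (μ x) * Real.sqrt (μ y) * (∑ i, f i x * f i y)
        = if x = y then 1 else 0 := by
      rw [Finset.mul_sum]
      rw [← h]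
      refine Finset.sum_congr rfl fun i _ => by ring
    have hms : Real.sqrt (μ x) * Real.sqrt (μ x) = μ x :=
      Real.mul_self_sqrt (hμpos x).le
    by_cases hxy : x = y
    · subst hxy
      rw [hms] at h2
      rw [if_pos rfl] at h2 ⊢
      rw [eq_div_iff (hμpos x).ne']
      linear_combination h2
    · rw [if_neg hxy] at h2 ⊢
      rcases mul_eq_zero.mp h2 with h3 | h3
      · exact absurd h3 (mul_pos hsxpos hsypos).ne'
      · exact h3
  constructor
  · rintro ⟨K, hK1, hKpos, hKf⟩
    -- l 0 = 1
    have hf0fun : f 0 = fun _ => 1 := funext hf0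
    have hl0 : l 0 = 1 := by
      have h := hKf 0
      rw [hf0fun, hK1] at h
      have := congrFun h x₀
      simpa using this.symm
    -- indicator functions
    set δ : E → (E → ℝ) := fun y x => if x = y then 1 else 0 with hδ
    have hδrep : ∀ y, δ y = ∑ i, (μ y * f i y) • f i := by
      intro y
      funext x
      rw [Finset.sum_apply]
      simp only [Pi.smul_apply, smul_eq_mul]
      have : ∑ i, μ y * f i y * f i x = μ y * ∑ i, f i x * f i y := by
        rw [Finset.mul_sum]; exact Finset.sum_congr rfl fun i _ => by ring
      rw [this, key x y]
      by_cases hxy : x = y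
      · subst hxy
        simp [hδ, (hμpos x).ne']
      · simp [hδ, hxy]
    set ν : E → ℝ := fun y => K (δ y) x₀ with hν
    have hνform : ∀ y, ν y = ∑ i, μ y * f i y * l i * f i x₀ := by
      intro y
      rw [hν]
      simp only
      rw [hδrep y, map_sum]
      rw [Finset.sum_apply]
      refine Finset.sum_congr rfl fun i _ => ?_
      rw [map_smul, hKf i]
      simp only [Pi.smul_apply, smul_eq_mul]
      ring
    refine ⟨ν, ?_, ?_, ?_⟩
    · intro y
      apply hKpos
      intro x
      simp only [hδ]
      split <;> norm_num
    · have h1 : ∑ y, ν y = ∑ i, (∑ y, μ y * f i y) * (l i * f i x₀) := by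
        rw [show ∑ y, ν y = ∑ y, ∑ i, μ y * f i y * l i * f i x₀ from
          Finset.sum_congr rfl fun y _ => hνform y, Finset.sum_comm]
        refine Finset.sum_congr rfl fun i _ => ?_
        rw [Finset.sum_mul]
        exact Finset.sum_congr rfl fun y _ => by ring
      rw [h1]
      have h2 : ∀ i : Fin (n + 1),
          (∑ y, μ y * f i y) * (l i * f i x₀) = if i = 0 then 1 else 0 := by
        intro i
        rw [hmom i]
        by_cases hi : i = 0
        · subst hi; simp [hl0, hf0]
        · simp [hi]
      rw [Finset.sum_congr rfl fun i _ => h2 i]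
      simp
    · intro i
      have h1 : ∑ x, ν x * (f i x / f i x₀)
          = ∑ j, (∑ x, μ x * f j x * f i x) * (l j * f j x₀ / f i x₀) := by
        rw [show ∑ x, ν x * (f i x / f i x₀)
            = ∑ x, ∑ j, (μ x * f j x * f i x) * (l j * f j x₀ / f i x₀) from
          Finset.sum_congr rfl fun x _ => by
            rw [hνform x, Finset.sum_mul]
            exact Finset.sum_congr rfl fun j _ => by ring, Finset.sum_comm]
        exact Finset.sum_congr rfl fun j _ => (Finset.sum_mul _ _ _).symm
      rw [h1]
      have : ∀ j, (∑ x, μ x * f j x * f i x) * (l j * f j x₀ / f i x₀)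
          = if j = i then l i else 0 := by
        intro j
        rw [horth j i]
        by_cases hji : j = i
        · subst hji; rw [if_pos rfl, if_pos rfl, one_mul,
            mul_div_assoc, div_self (hpos _).ne', mul_one]
        · simp [hji]
      rw [Finset.sum_congr rfl fun j _ => this j]
      simp
  · rintro ⟨ν, hν0, hνsum, hl⟩
    have hl0 : l 0 = 1 := by
      rw [hl 0]
      simp only [hf0, div_self (hpos 0).ne']
      simpa using hνsum
    set k : E → E → ℝ := fun x y => ∑ i, l i * f i x * f i y * μ y with hk
    refine ⟨{ toFun := fun g x => ∑ y, k x y * g y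
              map_add' := by
                intro g h
                funext x
                simp only [Pi.add_apply, mul_add, Finset.sum_add_distrib]
              map_smul' := by
                intro c g
                funext x
                simp only [Pi.smul_apply, smul_eq_mul, RingHom.id_apply,
                  Finset.mul_sum]
                exact Finset.sum_congr rfl fun y _ => by ring }, ?_, ?_, ?_⟩
    · funext x
      simp only [LinearMap.coe_mk, AddHom.coe_mk, mul_one]
      have : ∑ y, k x y = ∑ i, l i * f i x * (∑ y, μ y * f i y) := by
        rw [Finset.sum_comm]
        refine Finset.sum_congr rfl fun i _ => ?_
        rw [Finset.mul_sum]
        exact Finset.sum_congr rfl fun y _ => by ring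
      rw [this]
      have : ∀ i, l i * f i x * (∑ y, μ y * f i y) = if i = 0 then (1:ℝ) else 0 := by
        intro i
        rw [hmom i]
        by_cases hi : i = 0
        · subst hi; simp [hl0, hf0]
        · simp [hi]
      rw [Finset.sum_congr rfl fun i _ => this i]
      simp
    · intro g hg x
      simp only [LinearMap.coe_mk, AddHom.coe_mk]
      refine Finset.sum_nonneg fun y _ => mul_nonneg ?_ (hg y)
      have hkey : k x y = μ y * ∑ z, ν z * ∑ i, f i x * f i y * f i z / f i x₀ := by
        have h1 : k x y = ∑ i, ∑ z, ν z * (f i x * f i y * f i z / f i x₀) * μ y := by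
          simp only [hk]
          refine Finset.sum_congr rfl fun i _ => ?_
          rw [hl i, Finset.sum_mul, Finset.sum_mul, Finset.sum_mul]
          exact Finset.sum_congr rfl fun z _ => by ring
        rw [h1, Finset.sum_comm, Finset.mul_sum]
        refine Finset.sum_congr rfl fun z _ => ?_
        rw [Finset.mul_sum, Finset.mul_sum]
        exact Finset.sum_congr rfl fun i _ => by ring
      rw [hkey]
      refine mul_nonneg (le_of_lt (hμpos y)) (Finset.sum_nonneg fun z _ =>
        mul_nonneg (hν0 z) (hHGP x y z))
    · intro j
      funext x
      simp only [LinearMap.coe_mk, AddHom.coe_mk, Pi.smul_apply, smul_eq_mul]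
      have h1 : ∑ y, k x y * f j y
          = ∑ i, l i * f i x * (∑ y, μ y * f i y * f j y) := by
        rw [show ∑ y, k x y * f j y = ∑ y, ∑ i, l i * f i x * (μ y * f i y * f j y) from
          Finset.sum_congr rfl fun y _ => by
            simp only [hk, Finset.sum_mul]
            exact Finset.sum_congr rfl fun i _ => by ring, Finset.sum_comm]
        exact Finset.sum_congr rfl fun i _ => (Finset.mul_sum _ _ _).symm
      rw [h1]
      have h2 : ∀ i, l i * f i x * (∑ y, μ y * f i y * f j y)
          = if i = j then l j * f j x else 0 := by
        intro i
        rw [horth i j]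
        by_cases hij : i = j
        · subst hij; simp
        · simp [hij]
      rw [Finset.sum_congr rfl fun i _ => h2 i]
      simp
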